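/- Let ⪯ be any well-order of ℚ of order type ω and let ⊑ be the tree order of T(ℚ, ≤, ⪯). Then every element a ∈ ℚ has exactly two immediate ⊑-successors in T(ℚ, ≤, ⪯): one that is ≤-smaller than a and one that is ≤-larger than a. In particular, T(ℚ, ≤, ⪯) is an infinite binary tree, regardless of the choice of the well-order. -/
import Mathlib


universe u

/-- `c` is strictly `le`-between `a` and `b`. -/
def strictlyBetween {α : Type u} (le : α → α → Prop) (a c b : α) : Prop :=
  (le a c ∧ le c b ∧ c ≠ a ∧ c ≠ b) ∨ (le b c ∧ le c a ∧ c ≠ a ∧ c ≠ b)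

/-- The tree relation `⊑` of `T(V, ≤, ⪯)`: `a ⊑ b` iff `a ⪯ b` and there is no `c`
strictly `≤`-between `a` and `b` with `c ⪯ a` and `c ⪯ b`. -/
def treeRel {α : Type u} (le pre : α → α → Prop) (a b : α) : Prop :=
  pre a b ∧ ¬∃ c, strictlyBetween le a c b ∧ pre c a ∧ pre c b

/-- `s` is well-ordered by `r` (`r` is a reflexive `≤`-style relation):
`r` is total on `s` and every nonempty subset of `s` has an `r`-least element. -/
def IsWellOrderedOn {α : Type u} (r : α → α → Prop) (s : Set α) : Prop :=
  (∀ a ∈ s, ∀ b ∈ s, r a b ∨ r b a) ∧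
  ∀ t : Set α, t ⊆ s → t.Nonempty → ∃ m ∈ t, ∀ x ∈ t, r m x

/-- `r` is a (set-theoretic, rooted) tree order: a partial order with a minimum element
in which the set of predecessors of every element is well-ordered. -/
def IsTreeOrder {α : Type u} (r : α → α → Prop) : Prop :=
  IsPartialOrder α r ∧ (∃ root, ∀ a, r root a) ∧
  ∀ a, IsWellOrderedOn r {b | r b a}

/-- `a` is a leaf of the tree order `r`: it has no strict successor. -/
def isLeaf {α : Type u} (r : α → α → Prop) (a : α) : Prop := ∀ b, r a b → b = a

/-- `b` is a son (immediate successor) of `a` in the tree order `r`. -/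
def isSon {α : Type u} (r : α → α → Prop) (a b : α) : Prop :=
  r a b ∧ a ≠ b ∧ ∀ c, r a c → r c b → c = a ∨ c = b

/-- `a` has exactly two sons in the tree order `r`. -/
def hasTwoSons {α : Type u} (r : α → α → Prop) (a : α) : Prop :=
  ∃ b c, b ≠ c ∧ isSon r a b ∧ isSon r a c ∧ ∀ d, isSon r a d → d = b ∨ d = c

/-- `(le, pre)` is a compatible pair of orders: `le` is a linear order, `pre` a preorder,
`T(V, le, pre)` is defined (i.e. `treeRel le pre` is a tree order), and every element
is either a leaf or has exactly two sons. -/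
def CompatPair {α : Type u} (le pre : α → α → Prop) : Prop :=
  IsLinearOrder α le ∧ IsPreorder α pre ∧ IsTreeOrder (treeRel le pre) ∧
  ∀ a, isLeaf (treeRel le pre) a ∨ hasTwoSons (treeRel le pre) a

/-- `m` is the meet of `a` and `b` in the tree order `r`. -/
def isMeet {α : Type u} (r : α → α → Prop) (a b m : α) : Prop :=
  r m a ∧ r m b ∧ ∀ x, r x a → r x b → r x m

/-- `C` is closed under the meet operation of the tree order `r`. -/
def MeetClosed {α : Type u} (r : α → α → Prop) (C : Set α) : Prop :=
  ∀ a ∈ C, ∀ b ∈ C, ∀ m, isMeet r a b m → m ∈ C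

/-- Any nonempty set has a `pre`-least element, given finite initial segments. -/
lemma exists_premin (pre : ℚ → ℚ → Prop) (hlin : IsLinearOrder ℚ pre)
    (homega : ∀ x : ℚ, {y : ℚ | pre y x}.Finite)
    (S : Set ℚ) (hS : S.Nonempty) : ∃ m ∈ S, ∀ x ∈ S, pre m x := by
  haveI := hlin
  have hrefl : ∀ x, pre x x := fun x => refl_of pre x
  have htrans : ∀ {x y z}, pre x y → pre y z → pre x z :=
    fun h1 h2 => _root_.trans_of pre h1 h2
  have htot : ∀ x y, pre x y ∨ pre y x := fun x y => total_of pre x y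
  set rank : ℚ → ℕ := fun x => {y | pre y x}.ncard with hrankdef
  have key : ∀ x y, pre x y → ¬ pre y x → rank x < rank y := by
    intro x y hxy hyx
    have hsub : {z | pre z x} ⊂ {z | pre z y} := by
      constructor
      · intro z hz; exact htrans hz hxy
      · intro h; exact hyx (h (hrefl y))
    exact Set.ncard_lt_ncard hsub (homega y)
  obtain ⟨x0, hx0⟩ := hS
  have hTfin : {y | y ∈ S ∧ pre y x0}.Finite :=
    (homega x0).subset (fun y hy => hy.2)
  have hx0T : x0 ∈ hTfin.toFinset := by
    rw [Set.Finite.mem_toFinset]; exact ⟨hx0, hrefl x0⟩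
  obtain ⟨m, hmem, hmin⟩ := hTfin.toFinset.exists_min_image rank ⟨x0, hx0T⟩
  rw [Set.Finite.mem_toFinset] at hmem
  have hminpre : ∀ x, x ∈ S → pre x x0 → pre m x := by
    intro x hxS hx
    rcases htot m x with h1 | h2
    · exact h1
    by_contra h
    have hx' : x ∈ hTfin.toFinset := by rw [Set.Finite.mem_toFinset]; exact ⟨hxS, hx⟩
    have := key x m h2 h
    have := hmin x hx'
    omega
  refine ⟨m, hmem.1, fun x hx => ?_⟩
  rcases htot x x0 with h1 | h2
  · exact hminpre x hx h1
  · exact htrans (hminpre x0 hx0 (hrefl x0)) h2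

/-- Generic construction: on the `lt`-side of `a` there is exactly one son. -/
lemma exists_side_son (lt : ℚ → ℚ → Prop) (pre : ℚ → ℚ → Prop)
    (hlin : IsLinearOrder ℚ pre) (homega : ∀ x : ℚ, {y : ℚ | pre y x}.Finite)
    (hne : ∀ {x y}, lt x y → x ≠ y)
    (hasymm : ∀ {x y}, lt x y → ¬ lt y x)
    (hltrans : ∀ {x y z}, lt x y → lt y z → lt x z)
    (htrich : ∀ x y : ℚ, x ≠ y → lt x y ∨ lt y x)
    (hbtw : ∀ a c b : ℚ, strictlyBetween (· ≤ ·) a c b ↔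
      (lt a c ∧ lt c b) ∨ (lt b c ∧ lt c a))
    (hgap : ∀ (a : ℚ) (S : Set ℚ), S.Finite → ∃ x, lt a x ∧ ∀ c ∈ S, lt a c → lt x c)
    (a : ℚ) :
    ∃ b, lt a b ∧ isSon (treeRel (· ≤ ·) pre) a b ∧
      ∀ d, isSon (treeRel (· ≤ ·) pre) a d → lt a d → d = b := by
  haveI := hlin
  have hrefl : ∀ x, pre x x := fun x => refl_of pre x
  have hptrans : ∀ {x y z}, pre x y → pre y z → pre x z :=
    fun h1 h2 => _root_.trans_of pre h1 h2
  have hptot : ∀ x y, pre x y ∨ pre y x := fun x y => total_of pre x y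
  have hpanti : ∀ {x y}, pre x y → pre y x → x = y := fun h1 h2 => antisymm_of pre h1 h2
  set R : Set ℚ := {x | lt a x ∧ pre a x ∧ ∀ c, lt a c → lt c x → ¬ pre c a} with hRdef
  have hRne : R.Nonempty := by
    obtain ⟨x, hax, hx⟩ := hgap a {c | pre c a} (homega a)
    refine ⟨x, hax, ?_, ?_⟩
    · rcases hptot a x with h | h
      · exact h
      · exact absurd (hne (hx x h hax)) (fun hh => hh rfl)
    · intro c hac hcx hca
      exact hasymm hcx (hx c hca hac)
  obtain ⟨b, hbR, hbmin⟩ := exists_premin pre hlin homega R hRne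
  have tree_of_mem : ∀ x ∈ R, treeRel (· ≤ ·) pre a x := by
    rintro x ⟨hax, hpax, hx3⟩
    refine ⟨hpax, ?_⟩
    rintro ⟨c, hsb, hca, hcx⟩
    rw [hbtw] at hsb
    rcases hsb with ⟨h1, h2⟩ | ⟨h1, h2⟩
    · exact hx3 c h1 h2 hca
    · exact hne (hltrans (hltrans hax h1) h2) rfl
  have mem_of_tree : ∀ x, treeRel (· ≤ ·) pre a x → lt a x → x ∈ R := by
    rintro x ⟨hpax, hnb⟩ hax
    refine ⟨hax, hpax, ?_⟩
    intro c hac hcx hca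
    exact hnb ⟨c, (hbtw a c x).2 (Or.inl ⟨hac, hcx⟩), hca, hptrans hca hpax⟩
  have hRdown : ∀ x ∈ R, ∀ c, lt a c → lt c x → c ∈ R := by
    rintro x ⟨hax, hpax, hx3⟩ c hac hcx
    refine ⟨hac, ?_, ?_⟩
    · rcases hptot a c with h | h
      · exact h
      · exact absurd h (hx3 c hac hcx)
    · intro e hae hec
      exact hx3 e hae (hltrans hec hcx)
  have hson : isSon (treeRel (· ≤ ·) pre) a b := by
    refine ⟨tree_of_mem b hbR, hne hbR.1, ?_⟩
    intro c h1 h2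
    by_contra h
    push_neg at h
    obtain ⟨hca, hcb⟩ := h
    rcases htrich c a hca with hlt | hac
    · exact h2.2 ⟨a, (hbtw c a b).2 (Or.inl ⟨hlt, hbR.1⟩), h1.1, hbR.2.1⟩
    · have hcR : c ∈ R := mem_of_tree c h1 hac
      exact hcb (hpanti (h2.1) (hbmin c hcR))
  refine ⟨b, hbR.1, hson, ?_⟩
  intro d hd had
  have hdR : d ∈ R := mem_of_tree d hd.1 had
  by_contra hdb
  have htbd : treeRel (· ≤ ·) pre b d := by
    refine ⟨hbmin d hdR, ?_⟩
    rintro ⟨c, hsb, hcb, hcd⟩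
    rw [hbtw] at hsb
    rcases hsb with ⟨h1, h2⟩ | ⟨h1, h2⟩
    · have hcR : c ∈ R := hRdown d hdR c (hltrans hbR.1 h1) h2
      exact hne h1 (hpanti hcb (hbmin c hcR)).symm
    · have hcR : c ∈ R := hRdown b hbR c (hltrans hdR.1 h1) h2
      exact hne h2 (hpanti hcb (hbmin c hcR))
  rcases hd.2.2 b (tree_of_mem b hbR) htbd with h | h
  · exact hne hbR.1 h.symm
  · exact hdb h.symm

/-- For any well-order `⪯` of `ℚ` of order type `ω`, every element of `T(ℚ, ≤, ⪯)` has
exactly two immediate successors: one `≤`-smaller and one `≤`-larger; in particular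
`T(ℚ, ≤, ⪯)` is an infinite binary tree. -/
theorem treeRel_rationals_binary (pre : ℚ → ℚ → Prop)
    (hlin : IsLinearOrder ℚ pre) (homega : ∀ x : ℚ, {y : ℚ | pre y x}.Finite) :
    ∀ a : ℚ, ∃ b c : ℚ, b < a ∧ a < c ∧
      isSon (treeRel (· ≤ ·) pre) a b ∧ isSon (treeRel (· ≤ ·) pre) a c ∧
      ∀ d, isSon (treeRel (· ≤ ·) pre) a d → d = b ∨ d = c := by
  intro a
  have hbtw1 : ∀ a c b : ℚ, strictlyBetween (· ≤ ·) a c b ↔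
      (a < c ∧ c < b) ∨ (b < c ∧ c < a) := by
    intro a c b
    unfold strictlyBetween
    constructor
    · rintro (⟨h1, h2, h3, h4⟩ | ⟨h1, h2, h3, h4⟩)
      · exact Or.inl ⟨h1.lt_of_ne (Ne.symm h3), h2.lt_of_ne h4⟩
      · exact Or.inr ⟨h1.lt_of_ne (Ne.symm h4), h2.lt_of_ne h3⟩
    · rintro (⟨h1, h2⟩ | ⟨h1, h2⟩)
      · exact Or.inl ⟨h1.le, h2.le, h1.ne', h2.ne⟩
      · exact Or.inr ⟨h1.le, h2.le, h2.ne, h1.ne'⟩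
  have hgap1 : ∀ (a : ℚ) (S : Set ℚ), S.Finite →
      ∃ x, a < x ∧ ∀ c ∈ S, a < c → x < c := by
    intro a S hS
    classical
    have hFne : (insert (a + 1) (hS.toFinset.filter (a < ·))).Nonempty :=
      ⟨a + 1, Finset.mem_insert_self _ _⟩
    have ham : a < (insert (a + 1) (hS.toFinset.filter (a < ·))).min' hFne := by
      rcases Finset.mem_insert.1 (Finset.min'_mem _ hFne) with h | h
      · rw [h]; linarith
      · exact (Finset.mem_filter.1 h).2
    refine ⟨(a + (insert (a + 1) (hS.toFinset.filter (a < ·))).min' hFne) / 2,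
      by linarith, ?_⟩
    intro c hc hac
    have hcF : c ∈ insert (a + 1) (hS.toFinset.filter (a < ·)) :=
      Finset.mem_insert_of_mem (Finset.mem_filter.2 ⟨hS.mem_toFinset.2 hc, hac⟩)
    have := Finset.min'_le _ c hcF
    linarith
  have hgap2 : ∀ (a : ℚ) (S : Set ℚ), S.Finite →
      ∃ x, x < a ∧ ∀ c ∈ S, c < a → c < x := by
    intro a S hS
    classical
    have hFne : (insert (a - 1) (hS.toFinset.filter (· < a))).Nonempty :=
      ⟨a - 1, Finset.mem_insert_self _ _⟩
    have ham : (insert (a - 1) (hS.toFinset.filter (· < a))).max' hFne < a := by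
      rcases Finset.mem_insert.1 (Finset.max'_mem _ hFne) with h | h
      · rw [h]; linarith
      · exact (Finset.mem_filter.1 h).2
    refine ⟨(a + (insert (a - 1) (hS.toFinset.filter (· < a))).max' hFne) / 2,
      by linarith, ?_⟩
    intro c hc hac
    have hcF : c ∈ insert (a - 1) (hS.toFinset.filter (· < a)) :=
      Finset.mem_insert_of_mem (Finset.mem_filter.2 ⟨hS.mem_toFinset.2 hc, hac⟩)
    have := Finset.le_max' _ c hcF
    linarith
  obtain ⟨c, hac, hsonc, hc⟩ :=
    exists_side_son (· < ·) pre hlin homega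
      (fun h => ne_of_lt h) (fun h => not_lt_of_gt h)
      (fun h1 h2 => lt_trans h1 h2) (fun x y h => h.lt_or_gt)
      hbtw1 hgap1 a
  obtain ⟨b, hba, hsonb, hb⟩ :=
    exists_side_son (fun x y => y < x) pre hlin homega
      (fun h => ne_of_gt h) (fun h => not_lt_of_gt h)
      (fun h1 h2 => lt_trans h2 h1) (fun x y h => (h.lt_or_gt).symm)
      (by
        intro a c b
        rw [hbtw1]
        constructor
        · rintro (⟨h1, h2⟩ | ⟨h1, h2⟩)
          · exact Or.inr ⟨h2, h1⟩
          · exact Or.inl ⟨h2, h1⟩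
        · rintro (⟨h1, h2⟩ | ⟨h1, h2⟩)
          · exact Or.inr ⟨h2, h1⟩
          · exact Or.inl ⟨h2, h1⟩)
      (by
        intro a S hS
        obtain ⟨x, hx1, hx2⟩ := hgap2 a S hS
        exact ⟨x, hx1, fun c hc hca => hx2 c hc hca⟩) a
  refine ⟨b, c, hba, hac, hsonb, hsonc, ?_⟩
  intro d hd
  have hda : d ≠ a := fun h => hd.2.1 h.symm
  rcases hda.lt_or_gt with h | h
  · exact Or.inl (hb d hd h)
  · exact Or.inr (hc d hd h)
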